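/- Let S_P be SPD, C_f of full column rank, R a given right-hand side, and P = I − C_f (C_fᵀ S_P C_f)⁻¹ C_fᵀ S_P. If δU = δU_C + δU_K with δU_C ∈ Im(C_f), δU_K ∈ Ker(C_fᵀ S_P), and S_P δU = R, then δU_C = C_f (C_fᵀ S_P C_f)⁻¹ C_fᵀ R and (Pᵀ S_P P) δU_K = Pᵀ R. -/

import Mathlib

open Matrix

/-- Decoupling of the condensed linearized system: if `δU = δU_C + δU_K` with
`δU_C ∈ Im(C_f)`, `δU_K ∈ Ker(C_fᵀ S_P)` and `S_P δU = R`, then `δU_C` is the coarse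
initialization and `δU_K` solves the projected problem. -/
theorem condensed_system_decoupling {nf nc : ℕ}
    (SP : Matrix (Fin nf) (Fin nf) ℝ) (Cf : Matrix (Fin nf) (Fin nc) ℝ)
    (hSP : SP.PosDef)
    (hCf : ∀ x : Fin nc → ℝ, Cf *ᵥ x = 0 → x = 0)
    (R dU dUC dUK : Fin nf → ℝ)
    (hC : ∃ a : Fin nc → ℝ, dUC = Cf *ᵥ a)
    (hK : (Cfᵀ * SP) *ᵥ dUK = 0)
    (hsplit : dU = dUC + dUK)
    (hsol : SP *ᵥ dU = R) :
    dUC = Cf *ᵥ ((Cfᵀ * SP * Cf)⁻¹ *ᵥ (Cfᵀ *ᵥ R)) ∧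
      ((1 - Cf * (Cfᵀ * SP * Cf)⁻¹ * Cfᵀ * SP)ᵀ * SP *
          (1 - Cf * (Cfᵀ * SP * Cf)⁻¹ * Cfᵀ * SP)) *ᵥ dUK
        = (1 - Cf * (Cfᵀ * SP * Cf)⁻¹ * Cfᵀ * SP)ᵀ *ᵥ R := by
  obtain ⟨a, ha⟩ := hC
  have hSPt : SPᵀ = SP := by
    have := hSP.1
    rw [Matrix.IsHermitian] at this
    exact (Matrix.conjTranspose_eq_transpose_of_trivial SP).symm.trans this
  set M : Matrix (Fin nc) (Fin nc) ℝ := Cfᵀ * SP * Cf with hM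
  have hMt : Mᵀ = M := by
    rw [hM, Matrix.transpose_mul, Matrix.transpose_mul, Matrix.transpose_transpose,
      hSPt, Matrix.mul_assoc]
  -- M is positive definite
  have hMpd : M.PosDef := by
    refine Matrix.PosDef.of_dotProduct_mulVec_pos ?_ ?_
    · show Mᴴ = M
      rw [show (Mᴴ : Matrix (Fin nc) (Fin nc) ℝ) = Mᵀ from rfl, hMt]
    · intro x hx
      have hCx : Cf *ᵥ x ≠ 0 := fun h => hx (hCf x h)
      have h1 := hSP.dotProduct_mulVec_pos hCx
      have h2 : star x ⬝ᵥ M *ᵥ x = star (Cf *ᵥ x) ⬝ᵥ SP *ᵥ (Cf *ᵥ x) := by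
        simp only [star_trivial, hM, ← Matrix.mulVec_mulVec,
          Matrix.dotProduct_mulVec, Matrix.vecMul_transpose]
      rw [h2]; exact h1
  have hMinv : IsUnit M.det := isUnit_iff_ne_zero.mpr hMpd.det_pos.ne'
  have hMinvM : M⁻¹ * M = 1 := Matrix.nonsing_inv_mul M hMinv
  have hMinvT : M⁻¹ᵀ = M⁻¹ := by rw [Matrix.transpose_nonsing_inv, hMt]
  -- Cfᵀ R = M a
  have hMa : M *ᵥ a = Cfᵀ *ᵥ R := by
    have h1 : Cfᵀ *ᵥ R = (Cfᵀ * SP) *ᵥ dU := by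
      rw [← hsol, Matrix.mulVec_mulVec]
    rw [h1, hsplit, Matrix.mulVec_add, hK, add_zero, ha, hM,
      ← Matrix.mulVec_mulVec]
  -- first conclusion
  have hfirst : dUC = Cf *ᵥ (M⁻¹ *ᵥ (Cfᵀ *ᵥ R)) := by
    have h2 : M⁻¹ *ᵥ (M *ᵥ a) = a := by
      rw [Matrix.mulVec_mulVec, hMinvM, Matrix.one_mulVec]
    rw [← hMa, h2, ha]
  refine ⟨hfirst, ?_⟩
  set P : Matrix (Fin nf) (Fin nf) ℝ := 1 - Cf * M⁻¹ * Cfᵀ * SP with hP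
  -- P dUK = dUK
  have hPdUK : P *ᵥ dUK = dUK := by
    have h3 : (Cf * M⁻¹ * Cfᵀ * SP) *ᵥ dUK = 0 := by
      have h4 : (Cf * M⁻¹ * Cfᵀ * SP) *ᵥ dUK = (Cf * M⁻¹) *ᵥ ((Cfᵀ * SP) *ᵥ dUK) := by
        rw [Matrix.mulVec_mulVec, Matrix.mul_assoc, Matrix.mul_assoc]
      rw [h4, hK, Matrix.mulVec_zero]
    rw [hP, Matrix.sub_mulVec, h3, sub_zero, Matrix.one_mulVec]
  -- Pᵀ SP dUC = 0
  have hPtSPC : (Pᵀ * SP) *ᵥ dUC = 0 := by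
    have hPt : Pᵀ = 1 - SP * Cf * M⁻¹ * Cfᵀ := by
      rw [hP, Matrix.transpose_sub, Matrix.transpose_one, Matrix.transpose_mul,
        Matrix.transpose_mul, Matrix.transpose_mul, Matrix.transpose_transpose,
        hSPt, hMinvT]
      simp only [Matrix.mul_assoc]
    have hkey : SP * Cf * M⁻¹ * Cfᵀ * SP * Cf = SP * Cf := by
      have h5 : SP * Cf * M⁻¹ * Cfᵀ * SP * Cf = SP * Cf * (M⁻¹ * M) := by
        simp only [hM, Matrix.mul_assoc]
      rw [h5, hMinvM, Matrix.mul_one]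
    rw [hPt, ha, Matrix.sub_mul, Matrix.one_mul, Matrix.sub_mulVec,
      Matrix.mulVec_mulVec, Matrix.mulVec_mulVec, hkey, sub_self]
  -- conclude
  have hRHS : Pᵀ *ᵥ R = (Pᵀ * SP) *ᵥ dUK := by
    rw [← hsol, Matrix.mulVec_mulVec, hsplit, Matrix.mulVec_add, hPtSPC, zero_add]
  calc (Pᵀ * SP * P) *ᵥ dUK = (Pᵀ * SP) *ᵥ (P *ᵥ dUK) := by
        rw [Matrix.mulVec_mulVec]
    _ = (Pᵀ * SP) *ᵥ dUK := by rw [hPdUK]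
    _ = Pᵀ *ᵥ R := hRHS.symm
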